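/- Let R be a commutative ring with unit, let n ≥ 2, and let A_n be the line graph with vertices u_1, …, u_n and edges e_1, …, e_{n−1}, where s(e_j) = u_j and r(e_j) = u_{j+1}. Define words α_i = a^{i−1}b for i = 1, …, n−1 and α_n = a^{n−1} in L_{2,R}. Then the assignment u_i ↦ α_i α_i* and e_j ↦ α_j α_{j+1}* extends to a unital injective *-algebra homomorphism L_R(A_n) → L_{2,R}. -/

import Mathlib

set_option synthInstance.maxHeartbeats 1000000
set_option maxHeartbeats 1000000

/-- A directed graph `E = (E⁰, E¹, r, s)`. -/
structure LeavittGraph : Type 1 where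
  V : Type
  E : Type
  src : E → V
  rng : E → V

namespace LeavittGraph

/-- Generators of the Leavitt path algebra: vertices, (real) edges and ghost edges. -/
inductive LGen (G : LeavittGraph) : Type
  | vert : G.V → LGen G
  | edge : G.E → LGen G
  | ghost : G.E → LGen G

variable (G : LeavittGraph) (R : Type) [CommRing R]

open FreeAlgebra

/-- The defining relations of the Leavitt path algebra of `G` over `R`. -/
inductive LeavittRel : FreeAlgebra R (LGen G) → FreeAlgebra R (LGen G) → Prop
  | vert_self (v : G.V) :
      LeavittRel (ι R (.vert v) * ι R (.vert v)) (ι R (.vert v))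
  | vert_ne {v w : G.V} (h : v ≠ w) :
      LeavittRel (ι R (.vert v) * ι R (.vert w)) 0
  | src_edge (e : G.E) :
      LeavittRel (ι R (.vert (G.src e)) * ι R (.edge e)) (ι R (.edge e))
  | edge_rng (e : G.E) :
      LeavittRel (ι R (.edge e) * ι R (.vert (G.rng e))) (ι R (.edge e))
  | rng_ghost (e : G.E) :
      LeavittRel (ι R (.vert (G.rng e)) * ι R (.ghost e)) (ι R (.ghost e))
  | ghost_src (e : G.E) :
      LeavittRel (ι R (.ghost e) * ι R (.vert (G.src e))) (ι R (.ghost e))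
  | ghost_edge_self (e : G.E) :
      LeavittRel (ι R (.ghost e) * ι R (.edge e)) (ι R (.vert (G.rng e)))
  | ghost_edge_ne {e f : G.E} (h : e ≠ f) :
      LeavittRel (ι R (.ghost e) * ι R (.edge f)) 0
  | cuntz_krieger (v : G.V) (h : {e : G.E | G.src e = v}.Finite)
      (hne : {e : G.E | G.src e = v}.Nonempty) :
      LeavittRel (ι R (.vert v)) (∑ e ∈ h.toFinset, ι R (.edge e) * ι R (.ghost e))

/-- The ambient unital algebra: the quotient of the free algebra by the Leavitt relations.
The Leavitt path algebra itself is the non-unital subalgebra generated by the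
generators (for graphs with finitely many vertices it is unital with unit the sum
of the vertices, but this unit differs from the unit of the ambient algebra). -/
abbrev LeavittAmbient : Type := RingQuot (LeavittRel G R)

/-- The vertex idempotents, in the ambient algebra. -/
def av (v : G.V) : LeavittAmbient G R := RingQuot.mkAlgHom R (LeavittRel G R) (ι R (.vert v))

/-- The edge elements, in the ambient algebra. -/
def ae (e : G.E) : LeavittAmbient G R := RingQuot.mkAlgHom R (LeavittRel G R) (ι R (.edge e))

/-- The ghost edge elements, in the ambient algebra. -/
def ag (e : G.E) : LeavittAmbient G R := RingQuot.mkAlgHom R (LeavittRel G R) (ι R (.ghost e))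

/-- The generating set of the Leavitt path algebra inside the ambient algebra. -/
def genSet : Set (LeavittAmbient G R) :=
  Set.range (av G R) ∪ Set.range (ae G R) ∪ Set.range (ag G R)

/-- The involution on the generators: it fixes vertices and exchanges real and ghost
edges. -/
def starGen : LGen G → LGen G
  | .vert v => .vert v
  | .edge e => .ghost e
  | .ghost e => .edge e

/-- The auxiliary algebra homomorphism from the free algebra to the opposite of the
ambient algebra, implementing the involution on the generators. -/
noncomputable def preStar : FreeAlgebra R (LGen G) →ₐ[R] (LeavittAmbient G R)ᵐᵒᵖ :=
  FreeAlgebra.lift R fun g =>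
    MulOpposite.op (RingQuot.mkAlgHom R (LeavittRel G R) (ι R (starGen G g)))

lemma preStar_ι (g : LGen G) :
    preStar G R (ι R g) =
      MulOpposite.op (RingQuot.mkAlgHom R (LeavittRel G R) (ι R (starGen G g))) := by
  rw [preStar, FreeAlgebra.lift_ι_apply]

lemma preStar_mul_ι (g h : LGen G) :
    preStar G R (ι R g * ι R h) =
      MulOpposite.op (RingQuot.mkAlgHom R (LeavittRel G R)
        (ι R (starGen G h) * ι R (starGen G g))) := by
  rw [map_mul, preStar_ι, preStar_ι, ← MulOpposite.op_mul, ← map_mul]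

lemma preStar_rel {x y : FreeAlgebra R (LGen G)} (h : LeavittRel G R x y) :
    preStar G R x = preStar G R y := by
  induction h with
  | vert_self v =>
      rw [preStar_mul_ι, preStar_ι]
      simp only [starGen]
      exact congrArg _ (RingQuot.mkAlgHom_rel R (LeavittRel.vert_self v))
  | vert_ne h =>
      rw [preStar_mul_ι, map_zero]
      simp only [starGen]
      rw [RingQuot.mkAlgHom_rel R (LeavittRel.vert_ne (Ne.symm h)), map_zero,
        MulOpposite.op_zero]
  | src_edge e =>
      rw [preStar_mul_ι, preStar_ι]
      simp only [starGen]
      exact congrArg _ (RingQuot.mkAlgHom_rel R (LeavittRel.ghost_src e))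
  | edge_rng e =>
      rw [preStar_mul_ι, preStar_ι]
      simp only [starGen]
      exact congrArg _ (RingQuot.mkAlgHom_rel R (LeavittRel.rng_ghost e))
  | rng_ghost e =>
      rw [preStar_mul_ι, preStar_ι]
      simp only [starGen]
      exact congrArg _ (RingQuot.mkAlgHom_rel R (LeavittRel.edge_rng e))
  | ghost_src e =>
      rw [preStar_mul_ι, preStar_ι]
      simp only [starGen]
      exact congrArg _ (RingQuot.mkAlgHom_rel R (LeavittRel.src_edge e))
  | ghost_edge_self e =>
      rw [preStar_mul_ι, preStar_ι]
      simp only [starGen]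
      exact congrArg _ (RingQuot.mkAlgHom_rel R (LeavittRel.ghost_edge_self e))
  | ghost_edge_ne h =>
      rw [preStar_mul_ι, map_zero]
      simp only [starGen]
      rw [RingQuot.mkAlgHom_rel R (LeavittRel.ghost_edge_ne (Ne.symm h)), map_zero,
        MulOpposite.op_zero]
  | cuntz_krieger v h hne =>
      rw [preStar_ι, map_sum]
      simp only [preStar_mul_ι, starGen]
      rw [← Finset.op_sum, ← map_sum]
      exact congrArg _ (RingQuot.mkAlgHom_rel R (LeavittRel.cuntz_krieger v h hne))

/-- The auxiliary algebra homomorphism `L → Lᵐᵒᵖ` implementing the involution on the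
ambient algebra. -/
noncomputable def starMapAux : LeavittAmbient G R →ₐ[R] (LeavittAmbient G R)ᵐᵒᵖ :=
  RingQuot.liftAlgHom R ⟨preStar G R, fun _ _ h => preStar_rel G R h⟩

lemma starMapAux_mk (x : FreeAlgebra R (LGen G)) :
    starMapAux G R (RingQuot.mkAlgHom R (LeavittRel G R) x) = preStar G R x := by
  rw [starMapAux, RingQuot.liftAlgHom_mkAlgHom_apply]

lemma starMapAux_gen (g : LGen G) :
    starMapAux G R (RingQuot.mkAlgHom R (LeavittRel G R) (ι R g)) =
      MulOpposite.op (RingQuot.mkAlgHom R (LeavittRel G R) (ι R (starGen G g))) := by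
  rw [starMapAux_mk, preStar_ι]

lemma starMapAux_starMapAux (x : LeavittAmbient G R) :
    (starMapAux G R ((starMapAux G R x).unop)).unop = x := by
  obtain ⟨y, rfl⟩ := RingQuot.mkAlgHom_surjective R (LeavittRel G R) x
  induction y using FreeAlgebra.induction with
  | grade0 r =>
      simp only [AlgHom.commutes, MulOpposite.algebraMap_apply, MulOpposite.unop_op]
  | grade1 g =>
      rw [starMapAux_gen, MulOpposite.unop_op, starMapAux_gen, MulOpposite.unop_op]
      cases g <;> rfl
  | mul x y ihx ihy =>
      rw [map_mul, map_mul, MulOpposite.unop_mul, map_mul, MulOpposite.unop_mul, ihx, ihy]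
  | add x y ihx ihy =>
      rw [map_add, map_add, MulOpposite.unop_add, map_add, MulOpposite.unop_add, ihx, ihy]

/-- The involution making the ambient algebra (and hence `L_R(E)`) a `*`-ring; it fixes
the vertices and `R`, and exchanges real and ghost edges. -/
noncomputable instance instStarRing : StarRing (LeavittAmbient G R) where
  star x := (starMapAux G R x).unop
  star_involutive x := starMapAux_starMapAux G R x
  star_mul x y := by
    show (starMapAux G R (x * y)).unop =
      (starMapAux G R y).unop * (starMapAux G R x).unop
    rw [map_mul, MulOpposite.unop_mul]
  star_add x y := by
    show (starMapAux G R (x + y)).unop =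
      (starMapAux G R x).unop + (starMapAux G R y).unop
    rw [map_add, MulOpposite.unop_add]

lemma star_def (x : LeavittAmbient G R) : star x = (starMapAux G R x).unop := rfl

@[simp] lemma star_av (v : G.V) : star (av G R v) = av G R v := by
  rw [star_def, av, starMapAux_gen, MulOpposite.unop_op]; rfl

@[simp] lemma star_ae (e : G.E) : star (ae G R e) = ag G R e := by
  rw [star_def, ae, ag, starMapAux_gen, MulOpposite.unop_op]; rfl

@[simp] lemma star_ag (e : G.E) : star (ag G R e) = ae G R e := by
  rw [star_def, ae, ag, starMapAux_gen, MulOpposite.unop_op]; rfl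

/-- The involution on the ambient algebra is `R`-linear. -/
lemma star_smul' (r : R) (x : LeavittAmbient G R) : star (r • x) = r • star x := by
  show (starMapAux G R (r • x)).unop = r • (starMapAux G R x).unop
  rw [map_smul, MulOpposite.unop_smul]

/-- The Leavitt path algebra `L_R(E)`: the non-unital `*`-subalgebra of the ambient
algebra generated by the vertices, edges and ghost edges. -/
noncomputable def LPA : NonUnitalStarSubalgebra R (LeavittAmbient G R) where
  toNonUnitalSubalgebra := NonUnitalAlgebra.adjoin R (genSet G R)
  star_mem' := by
    intro a ha
    replace ha : a ∈ NonUnitalAlgebra.adjoin R (genSet G R) := ha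
    show star a ∈ NonUnitalAlgebra.adjoin R (genSet G R)
    induction ha using NonUnitalAlgebra.adjoin_induction with
    | mem x hx =>
        apply NonUnitalAlgebra.subset_adjoin R
        rcases hx with (⟨v, rfl⟩ | ⟨e, rfl⟩) | ⟨e, rfl⟩
        · rw [star_av]; exact Or.inl (Or.inl ⟨v, rfl⟩)
        · rw [star_ae]; exact Or.inr ⟨e, rfl⟩
        · rw [star_ag]; exact Or.inl (Or.inr ⟨e, rfl⟩)
    | add x y hx hy ihx ihy => rw [star_add]; exact add_mem ihx ihy
    | zero => rw [star_zero]; exact zero_mem _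
    | mul x y hx hy ihx ihy => rw [star_mul]; exact mul_mem ihy ihx
    | smul r x hx ih => rw [star_smul']; exact SMulMemClass.smul_mem r ih

/-- The vertex idempotent `v ∈ L_R(E)`. -/
def lv (v : G.V) : LPA G R :=
  ⟨av G R v, NonUnitalAlgebra.subset_adjoin R (Or.inl (Or.inl ⟨v, rfl⟩))⟩

/-- The edge element `e ∈ L_R(E)`. -/
def le (e : G.E) : LPA G R :=
  ⟨ae G R e, NonUnitalAlgebra.subset_adjoin R (Or.inl (Or.inr ⟨e, rfl⟩))⟩

/-- The ghost edge element `e* ∈ L_R(E)`. -/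
def lg (e : G.E) : LPA G R :=
  ⟨ag G R e, NonUnitalAlgebra.subset_adjoin R (Or.inr ⟨e, rfl⟩)⟩

variable {G}

/-- `IsPathFrom G u w es` means that the list of edges `es` is a path from `u` to `w`;
for the empty list this means `u = w`. -/
def IsPathFrom : G.V → G.V → List G.E → Prop
  | u, w, [] => u = w
  | u, w, e :: es => G.src e = u ∧ IsPathFrom (G.rng e) w es

/-- `IsCycleAt G u c` means `c` is a cycle based at `u`: a path of positive
length from `u` to `u`. -/
def IsCycleAt (u : G.V) (c : List G.E) : Prop :=
  c ≠ [] ∧ IsPathFrom u u c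

/-- A path (given as a list of edges) has an exit if some edge `f` of the graph has the same
source as some edge of the path, but is distinct from it. -/
def HasExit (c : List G.E) : Prop :=
  ∃ e ∈ c, ∃ f : G.E, G.src f = G.src e ∧ f ≠ e

variable (G)

/-- Product of a nonempty list of edges in `L_R(E)`. -/
noncomputable def edgeProd : G.E → List G.E → LPA G R
  | e, [] => le G R e
  | e, f :: es => le G R e * edgeProd f es

/-- The element of `L_R(E)` associated to a path: the product of the edges,
or the vertex `u` for a trivial path at `u`. -/
noncomputable def pathElem (u : G.V) : List G.E → LPA G R
  | [] => lv G R u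
  | e :: es => edgeProd G R e es

/-- Product of the ghost edges of a nonempty list of edges, in reverse order. -/
noncomputable def ghostProd : G.E → List G.E → LPA G R
  | e, [] => lg G R e
  | e, f :: es => ghostProd f es * lg G R e

/-- The element `γ*` of `L_R(E)` associated to a path `γ`: the product of the ghost
edges in reverse order, or the vertex `u` for a trivial path at `u`. -/
noncomputable def ghostElem (u : G.V) : List G.E → LPA G R
  | [] => lv G R u
  | e :: es => ghostProd G R e es

/-- `cpow x n = x ^ (n + 1)`, the (n+1)-st power in the non-unital algebra `L_R(E)`. -/
noncomputable def cpow (x : LPA G R) : ℕ → LPA G R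
  | 0 => x
  | n + 1 => x * cpow x n

/-- For a polynomial `q(z) = Σ_{n} r_n z^n`, a vertex idempotent `p` and an element `x`,
`polyCyc G R q p x = r_0 • p + Σ_{n ≥ 1} r_n • x ^ n`.  This is the element `q(α)` when
`p` is the base vertex of a cycle `α` with `x` the corresponding element. -/
noncomputable def polyCyc (q : Polynomial R) (p x : LPA G R) : LPA G R :=
  q.sum fun n r => r • (if n = 0 then p else cpow G R x (n - 1))

end LeavittGraph

/-- The four generators `a, a*, b, b*` of the Leavitt algebra `L_{2,R}`. -/
inductive L2Gen : Type
  | a : L2Gen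
  | astar : L2Gen
  | b : L2Gen
  | bstar : L2Gen

open FreeAlgebra

/-- The defining relations of `L_{2,R}`: `a*a = b*b = 1 = aa* + bb*`. -/
inductive L2Rel (R : Type) [CommRing R] : FreeAlgebra R L2Gen → FreeAlgebra R L2Gen → Prop
  | a_adj : L2Rel R (ι R .astar * ι R .a) 1
  | b_adj : L2Rel R (ι R .bstar * ι R .b) 1
  | ck : L2Rel R (ι R .a * ι R .astar + ι R .b * ι R .bstar) 1

/-- The Leavitt algebra `L_{2,R}`: the universal unital `R`-algebra generated by
`a, a*, b, b*` subject to `a*a = b*b = 1 = aa* + bb*`. -/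
abbrev L2 (R : Type) [CommRing R] : Type := RingQuot (L2Rel R)

variable (R : Type) [CommRing R]

/-- The generator `a` of `L_{2,R}`. -/
def La : L2 R := RingQuot.mkAlgHom R (L2Rel R) (ι R .a)

/-- The generator `b` of `L_{2,R}`. -/
def Lb : L2 R := RingQuot.mkAlgHom R (L2Rel R) (ι R .b)

/-- The generator `a*` of `L_{2,R}`. -/
def Lastar : L2 R := RingQuot.mkAlgHom R (L2Rel R) (ι R .astar)

/-- The generator `b*` of `L_{2,R}`. -/
def Lbstar : L2 R := RingQuot.mkAlgHom R (L2Rel R) (ι R .bstar)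

namespace L2

/-- The involution on the generators. -/
def starGen : L2Gen → L2Gen
  | .a => .astar
  | .astar => .a
  | .b => .bstar
  | .bstar => .b

/-- The auxiliary algebra homomorphism `L_{2,R} → L_{2,R}ᵐᵒᵖ` implementing the involution. -/
noncomputable def starMapAux : L2 R →ₐ[R] (L2 R)ᵐᵒᵖ :=
  RingQuot.liftAlgHom R
    ⟨FreeAlgebra.lift R fun g =>
      MulOpposite.op (RingQuot.mkAlgHom R (L2Rel R) (ι R (starGen g))), by
      intro x y h
      induction h with
      | a_adj =>
          rw [map_one, map_mul, FreeAlgebra.lift_ι_apply, FreeAlgebra.lift_ι_apply,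
            ← MulOpposite.op_mul, ← map_mul]
          simp only [starGen]
          rw [RingQuot.mkAlgHom_rel R L2Rel.a_adj, map_one, MulOpposite.op_one]
      | b_adj =>
          rw [map_one, map_mul, FreeAlgebra.lift_ι_apply, FreeAlgebra.lift_ι_apply,
            ← MulOpposite.op_mul, ← map_mul]
          simp only [starGen]
          rw [RingQuot.mkAlgHom_rel R L2Rel.b_adj, map_one, MulOpposite.op_one]
      | ck =>
          rw [map_one, map_add, map_mul, map_mul, FreeAlgebra.lift_ι_apply,
            FreeAlgebra.lift_ι_apply, FreeAlgebra.lift_ι_apply, FreeAlgebra.lift_ι_apply,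
            ← MulOpposite.op_mul, ← MulOpposite.op_mul, ← MulOpposite.op_add,
            ← map_mul, ← map_mul, ← map_add]
          simp only [starGen]
          rw [RingQuot.mkAlgHom_rel R L2Rel.ck, map_one, MulOpposite.op_one]⟩

lemma starMapAux_mk (x : FreeAlgebra R L2Gen) :
    starMapAux R (RingQuot.mkAlgHom R (L2Rel R) x) =
      FreeAlgebra.lift R (fun g =>
        MulOpposite.op (RingQuot.mkAlgHom R (L2Rel R) (ι R (starGen g)))) x := by
  simp [starMapAux, RingQuot.liftAlgHom_mkAlgHom_apply]

lemma starMapAux_gen (g : L2Gen) :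
    starMapAux R (RingQuot.mkAlgHom R (L2Rel R) (ι R g)) =
      MulOpposite.op (RingQuot.mkAlgHom R (L2Rel R) (ι R (starGen g))) := by
  rw [starMapAux_mk, FreeAlgebra.lift_ι_apply]

lemma starMapAux_starMapAux (x : L2 R) :
    (starMapAux R ((starMapAux R x).unop)).unop = x := by
  obtain ⟨y, rfl⟩ := RingQuot.mkAlgHom_surjective R (L2Rel R) x
  induction y using FreeAlgebra.induction with
  | grade0 r =>
      simp only [AlgHom.commutes, MulOpposite.algebraMap_apply, MulOpposite.unop_op]
  | grade1 g =>
      rw [starMapAux_gen, MulOpposite.unop_op, starMapAux_gen, MulOpposite.unop_op]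
      cases g <;> rfl
  | mul x y ihx ihy =>
      rw [map_mul, map_mul, MulOpposite.unop_mul, map_mul, MulOpposite.unop_mul, ihx, ihy]
  | add x y ihx ihy =>
      rw [map_add, map_add, MulOpposite.unop_add, map_add, MulOpposite.unop_add, ihx, ihy]

/-- The involution making `L_{2,R}` a `*`-algebra; it fixes `R`, and exchanges
`a ↔ a*` and `b ↔ b*`. -/
noncomputable instance instStarRing : StarRing (L2 R) where
  star x := (starMapAux R x).unop
  star_involutive x := starMapAux_starMapAux R x
  star_mul x y := by
    show (starMapAux R (x * y)).unop = (starMapAux R y).unop * (starMapAux R x).unop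
    rw [map_mul, MulOpposite.unop_mul]
  star_add x y := by
    show (starMapAux R (x + y)).unop = (starMapAux R x).unop + (starMapAux R y).unop
    rw [map_add, MulOpposite.unop_add]

lemma star_def (x : L2 R) : star x = (starMapAux R x).unop := rfl

@[simp] lemma star_La : star (La R) = Lastar R := by
  rw [star_def, La, Lastar, starMapAux_gen, MulOpposite.unop_op]; rfl

@[simp] lemma star_Lb : star (Lb R) = Lbstar R := by
  rw [star_def, Lb, Lbstar, starMapAux_gen, MulOpposite.unop_op]; rfl

@[simp] lemma star_Lastar : star (Lastar R) = La R := by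
  rw [star_def, La, Lastar, starMapAux_gen, MulOpposite.unop_op]; rfl

@[simp] lemma star_Lbstar : star (Lbstar R) = Lb R := by
  rw [star_def, Lb, Lbstar, starMapAux_gen, MulOpposite.unop_op]; rfl

/-- The involution on `L_{2,R}` is `R`-linear. -/
lemma star_smul' (r : R) (x : L2 R) : star (r • x) = r • star x := by
  show (starMapAux R (r • x)).unop = r • (starMapAux R x).unop
  rw [map_smul, MulOpposite.unop_smul]

/-- The defining relations hold in `L_{2,R}`. -/
lemma astar_a : star (La R) * La R = 1 := by
  rw [star_La, Lastar, La, ← map_mul, RingQuot.mkAlgHom_rel R L2Rel.a_adj, map_one]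

lemma bstar_b : star (Lb R) * Lb R = 1 := by
  rw [star_Lb, Lbstar, Lb, ← map_mul, RingQuot.mkAlgHom_rel R L2Rel.b_adj, map_one]

lemma ck_rel : La R * star (La R) + Lb R * star (Lb R) = 1 := by
  rw [star_La, star_Lb, La, Lastar, Lb, Lbstar, ← map_mul, ← map_mul, ← map_add,
    RingQuot.mkAlgHom_rel R L2Rel.ck, map_one]

end L2

open LeavittGraph

/-- The line graph `A_n` with vertices `0, …, n-1` and edges `j : j → j+1`. -/
def lineGraph (n : ℕ) : LeavittGraph :=
  ⟨Fin n, Fin (n - 1),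
    fun j => ⟨j.val, by have := j.isLt; omega⟩,
    fun j => ⟨j.val + 1, by have := j.isLt; omega⟩⟩

/-- The word `α_i` of the embedding of `L_R(A_n)` into `L_{2,R}`: `α_i = a^i b` for
`i < n - 1` and `α_{n-1} = a^{n-1}` (indices from `0`). -/
noncomputable def lineWord (R : Type) [CommRing R] (n i : ℕ) : L2 R :=
  if i = n - 1 then La R ^ (n - 1) else La R ^ i * Lb R

/-! ### Auxiliary lemmas in `L_{2,R}` -/

namespace L2Aux

variable (R : Type) [CommRing R]

lemma bstar_a : Lbstar R * La R = 0 := by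
  have h1 : Lastar R * La R = 1 := by
    have := L2.astar_a R; rwa [L2.star_La] at this
  have h2 : Lbstar R * Lb R = 1 := by
    have := L2.bstar_b R; rwa [L2.star_Lb] at this
  have hck : La R * Lastar R + Lb R * Lbstar R = 1 := by
    have := L2.ck_rel R; rwa [L2.star_La, L2.star_Lb] at this
  have key : Lbstar R * La R = Lbstar R * La R + Lbstar R * La R := by
    calc Lbstar R * La R = Lbstar R * ((La R * Lastar R + Lb R * Lbstar R) * La R) := by
            rw [hck, one_mul]
      _ = Lbstar R * La R * (Lastar R * La R) + Lbstar R * Lb R * (Lbstar R * La R) := by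
            noncomm_ring
      _ = Lbstar R * La R + Lbstar R * La R := by rw [h1, h2, mul_one, one_mul]
  exact left_eq_add.mp key

lemma astar_b : Lastar R * Lb R = 0 := by
  have := congrArg star (bstar_a R)
  rwa [star_mul, star_zero, L2.star_La, L2.star_Lbstar] at this

lemma star_La_pow (k : ℕ) : star (La R ^ k) = Lastar R ^ k := by
  rw [star_pow, L2.star_La]

lemma pow_cancel (k m : ℕ) :
    Lastar R ^ k * La R ^ m = if k ≤ m then La R ^ (m - k) else Lastar R ^ (k - m) := by
  induction k generalizing m with
  | zero => simp
  | succ k ih =>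
    cases m with
    | zero => simp
    | succ m =>
      have h1 : Lastar R * La R = 1 := by
        have := L2.astar_a R; rwa [L2.star_La] at this
      have : Lastar R ^ (k+1) * La R ^ (m+1)
          = Lastar R ^ k * (Lastar R * La R) * La R ^ m := by
        rw [pow_succ, pow_succ']; noncomm_ring
      rw [this, h1, mul_one, ih]
      simp [Nat.succ_le_succ_iff, Nat.succ_sub_succ]

lemma astar_pow_a_pow (k : ℕ) : Lastar R ^ k * La R ^ k = 1 := by
  rw [pow_cancel]; simp

lemma astar_pow_succ_b (k : ℕ) : Lastar R ^ (k+1) * Lb R = 0 := by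
  rw [pow_succ, mul_assoc, astar_b, mul_zero]

lemma bstar_a_pow_succ (k : ℕ) : Lbstar R * La R ^ (k+1) = 0 := by
  rw [pow_succ', ← mul_assoc, bstar_a, zero_mul]

lemma star_lineWord (n j : ℕ) :
    star (lineWord R n j) =
      if j = n - 1 then Lastar R ^ (n-1) else Lbstar R * Lastar R ^ j := by
  unfold lineWord
  split_ifs with h
  · rw [star_La_pow]
  · rw [star_mul, L2.star_Lb, star_La_pow]

/-- Orthonormality of the words `α_i`. -/
lemma wort (n i j : ℕ) (hi : i ≤ n - 1) (hj : j ≤ n - 1) :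
    star (lineWord R n i) * lineWord R n j = if i = j then 1 else 0 := by
  rw [star_lineWord]
  unfold lineWord
  rcases eq_or_ne i (n-1) with hi1 | hi1 <;> rcases eq_or_ne j (n-1) with hj1 | hj1
  · subst hi1; subst hj1
    simp [astar_pow_a_pow]
  · subst hi1
    rw [if_pos rfl, if_neg hj1, if_neg (by omega)]
    have hj2 : j < n - 1 := lt_of_le_of_ne hj hj1
    rw [← mul_assoc, pow_cancel, if_neg (by omega)]
    have : n - 1 - j = (n - 1 - j - 1) + 1 := by omega
    rw [this, astar_pow_succ_b]
  · subst hj1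
    rw [if_neg hi1, if_pos rfl, if_neg (by omega)]
    have hi2 : i < n - 1 := lt_of_le_of_ne hi hi1
    rw [mul_assoc, pow_cancel, if_pos (le_of_lt hi2)]
    have : n - 1 - i = (n - 1 - i - 1) + 1 := by omega
    rw [this, bstar_a_pow_succ]
  · rw [if_neg hi1, if_neg hj1]
    rcases eq_or_ne i j with hij | hij
    · subst hij
      rw [if_pos rfl]
      have : Lbstar R * Lastar R ^ i * (La R ^ i * Lb R)
          = Lbstar R * (Lastar R ^ i * La R ^ i) * Lb R := by noncomm_ring
      rw [this, astar_pow_a_pow, mul_one]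
      have := L2.bstar_b R; rwa [L2.star_Lb] at this
    · rw [if_neg hij]
      have : Lbstar R * Lastar R ^ i * (La R ^ j * Lb R)
          = Lbstar R * (Lastar R ^ i * La R ^ j) * Lb R := by noncomm_ring
      rw [this, pow_cancel]
      rcases le_or_gt i j with hle | hlt
      · rw [if_pos hle]
        have : j - i = (j - i - 1) + 1 := by omega
        rw [this, bstar_a_pow_succ, zero_mul]
      · rw [if_neg (by omega)]
        have : i - j = (i - j - 1) + 1 := by omega
        rw [this, mul_assoc, astar_pow_succ_b, mul_zero]

lemma sumId (m : ℕ) :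
    La R ^ m * Lastar R ^ m
      + ∑ i ∈ Finset.range m, (La R ^ i * Lb R) * star (La R ^ i * Lb R) = 1 := by
  induction m with
  | zero => simp
  | succ m ih =>
    rw [Finset.sum_range_succ]
    have hstar : star (La R ^ m * Lb R) = Lbstar R * Lastar R ^ m := by
      rw [star_mul, L2.star_Lb, star_La_pow]
    have hck : La R * Lastar R + Lb R * Lbstar R = 1 := by
      have := L2.ck_rel R; rwa [L2.star_La, L2.star_Lb] at this
    have key : La R ^ (m+1) * Lastar R ^ (m+1)
        + (La R ^ m * Lb R) * star (La R ^ m * Lb R) = La R ^ m * Lastar R ^ m := by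
      rw [hstar, pow_succ, pow_succ]
      calc La R ^ m * La R * (Lastar R ^ m * Lastar R)
            + La R ^ m * Lb R * (Lbstar R * Lastar R ^ m)
          = La R ^ m * ((La R * Lastar R + Lb R * Lbstar R) * Lastar R ^ m) := by
            have hcomm : Lastar R ^ m * Lastar R = Lastar R * Lastar R ^ m := by
              rw [← pow_succ, ← pow_succ']
            rw [hcomm]; noncomm_ring
        _ = La R ^ m * Lastar R ^ m := by rw [hck, one_mul]
    calc La R ^ (m+1) * Lastar R ^ (m+1)
          + (∑ i ∈ Finset.range m, (La R ^ i * Lb R) * star (La R ^ i * Lb R)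
            + (La R ^ m * Lb R) * star (La R ^ m * Lb R))
        = (La R ^ (m+1) * Lastar R ^ (m+1) + (La R ^ m * Lb R) * star (La R ^ m * Lb R))
          + ∑ i ∈ Finset.range m, (La R ^ i * Lb R) * star (La R ^ i * Lb R) := by abel
      _ = 1 := by rw [key, ih]

end L2Aux
/-! ### A representation of `L_{2,R}` on a free module -/

namespace L2Rep

variable (R : Type) [CommRing R]

/-- The free module on the set of infinite binary sequences. -/
abbrev M : Type := (ℕ → Bool) →₀ R

/-- Prepend a letter to an infinite sequence. -/
def cns (x : Bool) (s : ℕ → Bool) : ℕ → Bool := fun m =>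
  match m with
  | 0 => x
  | m + 1 => s m

/-- The tail of an infinite sequence. -/
def tl (s : ℕ → Bool) : ℕ → Bool := fun m => s (m + 1)

@[simp] lemma tl_cns (x : Bool) (s : ℕ → Bool) : tl (cns x s) = s := rfl

lemma cns_head_tl (s : ℕ → Bool) : cns (s 0) (tl s) = s := by
  funext m; cases m with
  | zero => rfl
  | succ m => rfl

/-- The shift operator (prepending `x`). -/
noncomputable def shf (x : Bool) : Module.End R (M R) :=
  Finsupp.lsum R fun s => LinearMap.toSpanSingleton R (M R) (Finsupp.single (cns x s) 1)

/-- The adjoint shift operator. -/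
noncomputable def shfS (x : Bool) : Module.End R (M R) :=
  Finsupp.lsum R fun s => LinearMap.toSpanSingleton R (M R)
    (if s 0 = x then Finsupp.single (tl s) 1 else 0)

@[simp] lemma shf_single (x : Bool) (s : ℕ → Bool) (r : R) :
    shf R x (Finsupp.single s r) = Finsupp.single (cns x s) r := by
  rw [shf, Finsupp.lsum_single, LinearMap.toSpanSingleton_apply, Finsupp.smul_single,
    smul_eq_mul, mul_one]

@[simp] lemma shfS_single (x : Bool) (s : ℕ → Bool) (r : R) :
    shfS R x (Finsupp.single s r) =
      if s 0 = x then Finsupp.single (tl s) r else 0 := by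
  rw [shfS, Finsupp.lsum_single, LinearMap.toSpanSingleton_apply]
  split_ifs
  · rw [Finsupp.smul_single, smul_eq_mul, mul_one]
  · rw [smul_zero]

lemma rel_adj (x : Bool) : shfS R x * shf R x = 1 := by
  apply Finsupp.lhom_ext
  intro s r
  rw [Module.End.mul_apply, shf_single, shfS_single]
  have h0 : cns x s 0 = x := rfl
  rw [if_pos h0, tl_cns, Module.End.one_apply]

lemma rel_ck : shf R false * shfS R false + shf R true * shfS R true = 1 := by
  apply Finsupp.lhom_ext
  intro s r
  rw [LinearMap.add_apply, Module.End.mul_apply, Module.End.mul_apply,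
    shfS_single, shfS_single, Module.End.one_apply]
  cases hs : s 0 with
  | false =>
      rw [if_pos rfl, if_neg (by simp [hs]), map_zero, add_zero, shf_single]
      rw [show cns false (tl s) = s by rw [← hs]; exact cns_head_tl s]
  | true =>
      rw [if_pos rfl, if_neg (by simp [hs]), map_zero, zero_add, shf_single]
      rw [show cns true (tl s) = s by rw [← hs]; exact cns_head_tl s]

/-- Images of generators. -/
noncomputable def fgen : L2Gen → Module.End R (M R)
  | .a => shf R false
  | .astar => shfS R false
  | .b => shf R true
  | .bstar => shfS R true

/-- The representation `π : L_{2,R} → End(M)`. -/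
noncomputable def rep : L2 R →ₐ[R] Module.End R (M R) :=
  RingQuot.liftAlgHom R ⟨FreeAlgebra.lift R (fgen R), by
    intro x y h
    induction h with
    | a_adj =>
        rw [map_mul, map_one, FreeAlgebra.lift_ι_apply, FreeAlgebra.lift_ι_apply]
        exact rel_adj R false
    | b_adj =>
        rw [map_mul, map_one, FreeAlgebra.lift_ι_apply, FreeAlgebra.lift_ι_apply]
        exact rel_adj R true
    | ck =>
        rw [map_add, map_mul, map_mul, map_one, FreeAlgebra.lift_ι_apply,
          FreeAlgebra.lift_ι_apply, FreeAlgebra.lift_ι_apply, FreeAlgebra.lift_ι_apply]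
        exact rel_ck R⟩

@[simp] lemma rep_La : rep R (La R) = shf R false := by
  rw [La, rep, RingQuot.liftAlgHom_mkAlgHom_apply, FreeAlgebra.lift_ι_apply]; rfl

@[simp] lemma rep_Lb : rep R (Lb R) = shf R true := by
  rw [Lb, rep, RingQuot.liftAlgHom_mkAlgHom_apply, FreeAlgebra.lift_ι_apply]; rfl

@[simp] lemma rep_Lastar : rep R (Lastar R) = shfS R false := by
  rw [Lastar, rep, RingQuot.liftAlgHom_mkAlgHom_apply, FreeAlgebra.lift_ι_apply]; rfl

@[simp] lemma rep_Lbstar : rep R (Lbstar R) = shfS R true := by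
  rw [Lbstar, rep, RingQuot.liftAlgHom_mkAlgHom_apply, FreeAlgebra.lift_ι_apply]; rfl

/-- The sequence `a^k b^∞` (`false^k true^∞`). -/
def pf (k : ℕ) : ℕ → Bool := fun m => if m < k then false else true

lemma pf_injective : Function.Injective pf := by
  intro k k' h
  by_contra hne
  rcases Nat.lt_or_ge k k' with hlt | hge
  · have h1 : pf k k = true := if_neg (by omega)
    have h2 : pf k' k = false := if_pos hlt
    rw [h] at h1; rw [h1] at h2; exact Bool.noConfusion h2
  · have hlt : k' < k := by omega
    have h1 : pf k' k' = true := if_neg (by omega)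
    have h2 : pf k k' = false := if_pos hlt
    rw [h] at h2; rw [h1] at h2; exact Bool.noConfusion h2

lemma cns_false_pf (m : ℕ) : cns false (pf m) = pf (m + 1) := by
  funext j; cases j with
  | zero => simp [cns, pf]
  | succ j =>
      show pf m j = pf (m+1) (j+1)
      simp only [pf]
      by_cases h : j < m
      · rw [if_pos h, if_pos (by omega)]
      · rw [if_neg h, if_neg (by omega)]

lemma cns_true_pf0 : cns true (pf 0) = pf 0 := by
  funext j; cases j with
  | zero => simp [cns, pf]
  | succ j => rfl

lemma tl_pf_succ (m : ℕ) : tl (pf (m + 1)) = pf m := by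
  rw [← cns_false_pf, tl_cns]

lemma pf_zero_head (m : ℕ) : pf m 0 = if 0 < m then false else true := rfl

lemma act_a_pow (k m : ℕ) (r : R) :
    rep R (La R ^ k) (Finsupp.single (pf m) r) = Finsupp.single (pf (k + m)) r := by
  induction k generalizing m with
  | zero => simp
  | succ k ih =>
    rw [pow_succ', map_mul, Module.End.mul_apply, ih, rep_La, shf_single, cns_false_pf,
      show k + m + 1 = k + 1 + m from by omega]

lemma act_astar_pow (k m : ℕ) (r : R) :
    rep R (Lastar R ^ k) (Finsupp.single (pf m) r) =
      if k ≤ m then Finsupp.single (pf (m - k)) r else 0 := by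
  induction k generalizing m with
  | zero => simp
  | succ k ih =>
    rw [pow_succ, map_mul, Module.End.mul_apply, rep_Lastar, shfS_single]
    cases m with
    | zero =>
        rw [if_neg (by simp [pf]), map_zero, if_neg (by omega)]
    | succ m =>
        rw [if_pos (by simp [pf]), tl_pf_succ, ih]
        by_cases h : k ≤ m
        · rw [if_pos h, if_pos (by omega), Nat.succ_sub_succ]
        · rw [if_neg h, if_neg (by omega)]

lemma act_bstar (m : ℕ) (r : R) :
    rep R (Lbstar R) (Finsupp.single (pf m) r) =
      if m = 0 then Finsupp.single (pf 0) r else 0 := by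
  rw [rep_Lbstar, shfS_single]
  cases m with
  | zero =>
      rw [if_pos (by simp [pf]), if_pos rfl]
      congr 1
  | succ m =>
      rw [if_neg (by simp [pf]), if_neg (by omega)]

lemma act_b_pf0 (r : R) :
    rep R (Lb R) (Finsupp.single (pf 0) r) = Finsupp.single (pf 0) r := by
  rw [rep_Lb, shf_single, cns_true_pf0]

/-- Action of the word `α_i`. -/
lemma act_w (n i : ℕ) (hi : i ≤ n - 1) (r : R) :
    rep R (lineWord R n i) (Finsupp.single (pf 0) r) = Finsupp.single (pf i) r := by
  unfold lineWord
  split_ifs with h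
  · rw [act_a_pow, Nat.add_zero, h]
  · rw [map_mul, Module.End.mul_apply, act_b_pf0, act_a_pow, Nat.add_zero]

/-- Action of the word `α_j*`. -/
lemma act_sw (n j j' : ℕ) (hj : j ≤ n - 1) (hj' : j' ≤ n - 1) (r : R) :
    rep R (star (lineWord R n j)) (Finsupp.single (pf j') r) =
      if j = j' then Finsupp.single (pf 0) r else 0 := by
  rw [L2Aux.star_lineWord]
  split_ifs with h1 h2 h2
  · subst h1; subst h2
    rw [act_astar_pow, if_pos le_rfl, Nat.sub_self]
  · subst h1
    rw [act_astar_pow, if_neg (by omega)]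
  · subst h2
    rw [map_mul, Module.End.mul_apply, act_astar_pow, if_pos le_rfl, Nat.sub_self,
      act_bstar, if_pos rfl]
  · rw [map_mul, Module.End.mul_apply, act_astar_pow]
    by_cases h : j ≤ j'
    · rw [if_pos h, act_bstar, if_neg (by omega)]
    · rw [if_neg h, map_zero]

/-- Action of `α_i α_j*`. -/
lemma act_ws (n i j j' : ℕ) (hi : i ≤ n - 1) (hj : j ≤ n - 1) (hj' : j' ≤ n - 1) (r : R) :
    rep R (lineWord R n i * star (lineWord R n j)) (Finsupp.single (pf j') r) =
      if j = j' then Finsupp.single (pf i) r else 0 := by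
  rw [map_mul, Module.End.mul_apply, act_sw R n j j' hj hj']
  split_ifs with h
  · exact act_w R n i hi r
  · exact map_zero _

end L2Rep
/-! ### Generic relations in the ambient Leavitt path algebra -/

namespace GraphRel

open LeavittGraph

variable (G : LeavittGraph) (R : Type) [CommRing R]

lemma av_mul_self (v : G.V) : av G R v * av G R v = av G R v := by
  rw [av, ← map_mul]
  exact RingQuot.mkAlgHom_rel R (LeavittRel.vert_self v)

lemma av_mul_ne {v w : G.V} (h : v ≠ w) : av G R v * av G R w = 0 := by
  unfold av
  rw [← map_mul, RingQuot.mkAlgHom_rel R (LeavittRel.vert_ne h), map_zero]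

lemma av_src_mul_ae (e : G.E) : av G R (G.src e) * ae G R e = ae G R e := by
  rw [av, ae, ← map_mul]
  exact RingQuot.mkAlgHom_rel R (LeavittRel.src_edge e)

lemma ae_mul_av_rng (e : G.E) : ae G R e * av G R (G.rng e) = ae G R e := by
  rw [av, ae, ← map_mul]
  exact RingQuot.mkAlgHom_rel R (LeavittRel.edge_rng e)

lemma ag_mul_ae_self (e : G.E) : ag G R e * ae G R e = av G R (G.rng e) := by
  rw [av, ae, ag, ← map_mul]
  exact RingQuot.mkAlgHom_rel R (LeavittRel.ghost_edge_self e)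

lemma ag_mul_ae_ne {e f : G.E} (h : e ≠ f) : ag G R e * ae G R f = 0 := by
  rw [ae, ag, ← map_mul, RingQuot.mkAlgHom_rel R (LeavittRel.ghost_edge_ne h), map_zero]

lemma av_ck (v : G.V) (h : {e : G.E | G.src e = v}.Finite)
    (hne : {e : G.E | G.src e = v}.Nonempty) :
    av G R v = ∑ e ∈ h.toFinset, ae G R e * ag G R e := by
  rw [av, RingQuot.mkAlgHom_rel R (LeavittRel.cuntz_krieger v h hne), map_sum]
  exact Finset.sum_congr rfl fun e _ => by rw [map_mul]; rfl

end GraphRel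

/-! ### Paths and matrix units in the Leavitt path algebra of the line graph -/

namespace LineAux

open LeavittGraph GraphRel

/-- Generic sandwich lemmas. -/
lemma sand {A : Type*} [Ring A] (x y z u v : A) (h : y * z = v) :
    (x * y) * (z * u) = x * (v * u) := by
  rw [mul_assoc, ← mul_assoc y z u, h]

lemma sand0 {A : Type*} [Ring A] (x y z u : A) (h : y * z = 0) :
    (x * y) * (z * u) = 0 := by
  rw [mul_assoc, ← mul_assoc y z u, h, zero_mul, mul_zero]

lemma sand1 {A : Type*} [Ring A] (x y z u : A) (h : y * z = 1) :
    (x * y) * (z * u) = x * u := by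
  rw [mul_assoc, ← mul_assoc y z u, h, one_mul]

variable (R : Type) [CommRing R] (n : ℕ)

/-- The vertex idempotents indexed by naturals (`0` out of range). -/
noncomputable def vtx (i : ℕ) : LeavittAmbient (lineGraph n) R :=
  if h : i < n then av (lineGraph n) R (⟨i, h⟩ : Fin n) else 0

/-- The edge elements indexed by naturals (`0` out of range). -/
noncomputable def edg (j : ℕ) : LeavittAmbient (lineGraph n) R :=
  if h : j < n - 1 then ae (lineGraph n) R (⟨j, h⟩ : Fin (n - 1)) else 0

lemma star_vtx (i : ℕ) : star (vtx R n i) = vtx R n i := by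
  unfold vtx; split_ifs
  · exact star_av _ _ _
  · exact star_zero _

lemma vtx_mul_vtx (i j : ℕ) :
    vtx R n i * vtx R n j = if i = j then vtx R n i else 0 := by
  rcases eq_or_ne i j with rfl | hne
  · rw [if_pos rfl]; unfold vtx; split_ifs with h
    · exact av_mul_self _ _ _
    · exact mul_zero 0
  · rw [if_neg hne]; unfold vtx; split_ifs with h1 h2 h2
    · exact av_mul_ne _ _ (fun hh => hne (by injection hh))
    · exact mul_zero _
    · exact zero_mul _
    · exact zero_mul _

lemma vtx_mul_edg (i : ℕ) : vtx R n i * edg R n i = edg R n i := by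
  unfold vtx edg
  by_cases h : i < n - 1
  · rw [dif_pos h, dif_pos (show i < n by omega)]
    exact av_src_mul_ae (lineGraph n) R (⟨i, h⟩ : Fin (n - 1))
  · rw [dif_neg h, mul_zero]

lemma edg_mul_vtx (i : ℕ) : edg R n i * vtx R n (i + 1) = edg R n i := by
  unfold vtx edg
  by_cases h : i < n - 1
  · rw [dif_pos h, dif_pos (show i + 1 < n by omega)]
    exact ae_mul_av_rng (lineGraph n) R (⟨i, h⟩ : Fin (n - 1))
  · rw [dif_neg h, zero_mul]

lemma gstar_mul_edg (i : ℕ) : star (edg R n i) * edg R n i = vtx R n (i + 1) := by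
  unfold vtx edg
  by_cases h : i < n - 1
  · erw [dif_pos h, dif_pos (show i + 1 < n by omega), star_ae]
    exact ag_mul_ae_self (lineGraph n) R (⟨i, h⟩ : Fin (n - 1))
  · rw [dif_neg h, dif_neg (show ¬ (i + 1 < n) by omega), star_zero, zero_mul]

lemma edg_mul_gstar (i : ℕ) (h : i < n - 1) :
    edg R n i * star (edg R n i) = vtx R n i := by
  unfold vtx edg
  erw [dif_pos h, dif_pos (show i < n by omega), star_ae]
  set v : Fin n := ⟨i, by omega⟩ with hv
  have hfin : {e : Fin (n - 1) | (lineGraph n).src e = v}.Finite := Set.toFinite _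
  have hmem : (⟨i, h⟩ : Fin (n - 1)) ∈ {e : Fin (n - 1) | (lineGraph n).src e = v} := rfl
  have hset : hfin.toFinset = {(⟨i, h⟩ : Fin (n - 1))} := by
    ext e
    erw [Set.Finite.mem_toFinset, Finset.mem_singleton]
    constructor
    · intro he
      have he' : (lineGraph n).src e = v := he
      have h2 := congrArg Fin.val he'
      exact Fin.ext h2
    · rintro rfl; exact hmem
  have := av_ck (lineGraph n) R v hfin ⟨_, hmem⟩
  erw [hset, Finset.sum_singleton] at this
  exact this.symm

/-- The path element starting at `i` of length `k`. -/
noncomputable def pth : ℕ → ℕ → LeavittAmbient (lineGraph n) R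
  | i, 0 => vtx R n i
  | i, k + 1 => edg R n i * pth (i + 1) k

@[simp] lemma pth_zero (i : ℕ) : pth R n i 0 = vtx R n i := rfl

@[simp] lemma pth_succ (i k : ℕ) : pth R n i (k + 1) = edg R n i * pth R n (i + 1) k := rfl

lemma vtx_mul_pth (i k : ℕ) : vtx R n i * pth R n i k = pth R n i k := by
  cases k with
  | zero => rw [pth_zero, vtx_mul_vtx, if_pos rfl]
  | succ k => rw [pth_succ, ← mul_assoc, vtx_mul_edg]

lemma pth_mul_vtx (i k : ℕ) : pth R n i k * vtx R n (i + k) = pth R n i k := by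
  induction k generalizing i with
  | zero => rw [pth_zero, Nat.add_zero, vtx_mul_vtx, if_pos rfl]
  | succ k ih =>
    rw [pth_succ, show i + (k + 1) = (i + 1) + k from by omega, mul_assoc, ih]

lemma pth_concat (i k m : ℕ) : pth R n i k * pth R n (i + k) m = pth R n i (k + m) := by
  induction k generalizing i with
  | zero => rw [pth_zero, Nat.add_zero, vtx_mul_pth, Nat.zero_add]
  | succ k ih =>
    rw [pth_succ, show i + (k + 1) = (i + 1) + k from by omega, mul_assoc, ih,
      show k + 1 + m = (k + m) + 1 from by omega, pth_succ]

lemma pth_mul_vtx_ne (i k j : ℕ) (h : j ≠ i + k) : pth R n i k * vtx R n j = 0 := by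
  rw [← pth_mul_vtx R n i k, mul_assoc, vtx_mul_vtx, if_neg (fun hh => h hh.symm), mul_zero]

lemma vtx_mul_pth_ne (i k j : ℕ) (h : j ≠ i) : vtx R n j * pth R n i k = 0 := by
  rw [← vtx_mul_pth R n i k, ← mul_assoc, vtx_mul_vtx, if_neg h, zero_mul]

lemma spth_mul_vtx (i k : ℕ) : star (pth R n i k) * vtx R n i = star (pth R n i k) := by
  rw [← star_vtx, ← star_mul, vtx_mul_pth]

lemma vtx_mul_spth (i k : ℕ) : vtx R n (i + k) * star (pth R n i k) = star (pth R n i k) := by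
  rw [← star_vtx, ← star_mul, pth_mul_vtx]

/-- Ghost path times path: full cancellation. -/
lemma spth_mul_pth (a b j : ℕ) :
    star (pth R n j a) * pth R n j b =
      if a ≤ b then pth R n (j + a) (b - a) else star (pth R n (j + b) (a - b)) := by
  induction a generalizing j b with
  | zero =>
    rw [pth_zero, star_vtx, vtx_mul_pth, if_pos (Nat.zero_le b), Nat.add_zero, Nat.sub_zero]
  | succ a ih =>
    cases b with
    | zero =>
      rw [pth_zero, spth_mul_vtx, if_neg (by omega)]
      simp only [Nat.add_zero, Nat.sub_zero]
    | succ b =>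
      rw [pth_succ, pth_succ, star_mul,
        sand _ _ _ _ _ (gstar_mul_edg R n j), vtx_mul_pth, ih]
      by_cases h : a ≤ b
      · rw [if_pos h, if_pos (by omega), show j + 1 + a = j + (a + 1) from by omega,
          Nat.succ_sub_succ]
      · rw [if_neg h, if_neg (by omega), show j + 1 + b = j + (b + 1) from by omega,
          Nat.succ_sub_succ]

/-- Popping the last edge of a path. -/
lemma pth_pop (i k : ℕ) (h : i + k + 1 ≤ n - 1) :
    pth R n i (k + 1) * star (edg R n (i + k)) = pth R n i k := by
  induction k generalizing i with
  | zero =>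
    have h2 : i + 0 = i := Nat.add_zero i
    rw [h2, pth_succ, pth_zero, edg_mul_vtx, edg_mul_gstar R n i (by omega), pth_zero]
  | succ k ih =>
    rw [pth_succ, show i + (k + 1) = (i + 1) + k from by omega, mul_assoc,
      ih (i + 1) (by omega), pth_succ]

/-- Path times ghost path ending at the same vertex: partial cancellation. -/
lemma pth_mul_spth (a b i l : ℕ) (hr : i + a ≤ n - 1) (heq : i + a = l + b) (hba : b ≤ a) :
    pth R n i a * star (pth R n l b) = pth R n i (a - b) := by
  induction b generalizing l with
  | zero =>
    rw [pth_zero, star_vtx, show l = i + a from by omega, pth_mul_vtx, Nat.sub_zero]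
  | succ b ih =>
    rw [pth_succ, star_mul, ← mul_assoc, ih (l + 1) (by omega) (by omega)]
    have h1 : a - b = (a - (b + 1)) + 1 := by omega
    have h2 : i + (a - (b + 1)) = l := by omega
    rw [h1, ← h2, pth_pop R n i (a - (b + 1)) (by omega)]

/-- Orthogonality lemmas. -/
lemma spth_mul_pth_ne (a b j k : ℕ) (h : j ≠ k) :
    star (pth R n j a) * pth R n k b = 0 := by
  rw [← spth_mul_vtx, ← vtx_mul_pth R n k b,
    sand0 _ _ _ _ (by rw [vtx_mul_vtx, if_neg h])]

lemma pth_mul_spth_ne (a b i l : ℕ) (h : i + a ≠ l + b) :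
    pth R n i a * star (pth R n l b) = 0 := by
  rw [← pth_mul_vtx, ← vtx_mul_spth R n l b,
    sand0 _ _ _ _ (by rw [vtx_mul_vtx, if_neg h])]

lemma pth_mul_pth_ne (a b i k : ℕ) (h : i + a ≠ k) :
    pth R n i a * pth R n k b = 0 := by
  rw [← pth_mul_vtx, ← vtx_mul_pth R n k b,
    sand0 _ _ _ _ (by rw [vtx_mul_vtx, if_neg h])]

/-- The matrix units. -/
noncomputable def EE (i j : ℕ) : LeavittAmbient (lineGraph n) R :=
  if i ≤ j then pth R n i (j - i) else star (pth R n j (i - j))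

/-- The matrix unit relations. -/
lemma EE_mul (i j k l : ℕ) (hj : j ≤ n - 1) :
    EE R n i j * EE R n k l = if j = k then EE R n i l else 0 := by
  unfold EE
  rcases le_or_gt i j with h1 | h1
  · rw [if_pos h1]
    rcases le_or_gt k l with h2 | h2
    · rw [if_pos h2]
      rcases eq_or_ne j k with rfl | hne
      · have key := pth_concat R n i (j - i) (l - j)
        rw [show i + (j - i) = j from by omega] at key
        rw [if_pos rfl, key, show j - i + (l - j) = l - i from by omega,
          if_pos (show i ≤ l by omega)]
      · rw [if_neg hne, pth_mul_pth_ne R n _ _ _ _ (by omega)]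
    · rw [if_neg (by omega)]
      rcases eq_or_ne j k with rfl | hne
      · rw [if_pos rfl]
        rcases le_or_gt i l with h3 | h3
        · rw [pth_mul_spth R n (j - i) (j - l) i l (by omega) (by omega) (by omega),
            show j - i - (j - l) = l - i from by omega, if_pos h3]
        · have key : pth R n i (j - i) * star (pth R n l (j - l))
              = star (pth R n l (j - l) * star (pth R n i (j - i))) := by
            rw [star_mul, star_star]
          rw [key, pth_mul_spth R n (j - l) (j - i) l i (by omega) (by omega) (by omega),
            show j - l - (j - i) = i - l from by omega, if_neg (by omega)]
      · rw [if_neg hne, pth_mul_spth_ne R n _ _ _ _ (by omega)]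
  · rw [if_neg (by omega)]
    rcases le_or_gt k l with h2 | h2
    · rw [if_pos h2]
      rcases eq_or_ne j k with rfl | hne
      · rw [if_pos rfl, spth_mul_pth]
        rcases le_or_gt i l with h3 | h3
        · rw [if_pos (by omega), if_pos h3, show j + (i - j) = i from by omega,
            show l - j - (i - j) = l - i from by omega]
        · rw [if_neg (by omega), if_neg (by omega), show j + (l - j) = l from by omega,
            show i - j - (l - j) = i - l from by omega]
      · rw [if_neg hne, spth_mul_pth_ne R n _ _ _ _ hne]
    · rw [if_neg (by omega)]
      rcases eq_or_ne j k with rfl | hne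
      · have key := pth_concat R n l (j - l) (i - j)
        rw [show l + (j - l) = j from by omega] at key
        rw [if_pos rfl, ← star_mul, key, show j - l + (i - j) = i - l from by omega,
          if_neg (show ¬ i ≤ l by omega)]
      · rw [if_neg hne, ← star_mul, pth_mul_pth_ne R n _ _ _ _ (by omega), star_zero]

lemma EE_vert (v : Fin n) : EE R n v.val v.val = av (lineGraph n) R v := by
  rw [EE, if_pos le_rfl, Nat.sub_self, pth_zero, vtx, dif_pos v.isLt]

lemma EE_edge (e : Fin (n - 1)) : EE R n e.val (e.val + 1) = ae (lineGraph n) R e := by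
  rw [EE, if_pos (by omega), Nat.add_sub_cancel_left, pth_succ, pth_zero, edg_mul_vtx,
    edg, dif_pos e.isLt]

lemma EE_ghost (e : Fin (n - 1)) : EE R n (e.val + 1) e.val = ag (lineGraph n) R e := by
  erw [EE, if_neg (by omega), Nat.add_sub_cancel_left, pth_succ, pth_zero, edg_mul_vtx,
    edg, dif_pos e.isLt, star_ae]

/-- The span of the matrix units. -/
noncomputable def ESpan : Submodule R (LeavittAmbient (lineGraph n) R) :=
  Submodule.span R (Set.range (fun p : Fin n × Fin n => EE R n p.1.val p.2.val))

lemma mul_mem_ESpan {x y : LeavittAmbient (lineGraph n) R}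
    (hx : x ∈ ESpan R n) (hy : y ∈ ESpan R n) : x * y ∈ ESpan R n := by
  have hle : ESpan R n * ESpan R n ≤ ESpan R n := by
    rw [ESpan, Submodule.span_mul_span]
    refine Submodule.span_le.mpr ?_
    rintro z hz
    obtain ⟨x, hx, y, hy, rfl⟩ := Set.mem_mul.mp hz
    obtain ⟨p, rfl⟩ := hx
    obtain ⟨q, rfl⟩ := hy
    rw [EE_mul R n _ _ _ _ (by have := p.2.isLt; omega)]
    split_ifs
    · exact Submodule.subset_span ⟨(p.1, q.2), rfl⟩
    · exact Submodule.zero_mem _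
  exact hle (Submodule.mul_mem_mul hx hy)

lemma adjoin_le_ESpan {x : LeavittAmbient (lineGraph n) R}
    (hx : x ∈ NonUnitalAlgebra.adjoin R (genSet (lineGraph n) R)) : x ∈ ESpan R n := by
  induction hx using NonUnitalAlgebra.adjoin_induction with
  | mem g hg =>
    rcases hg with (⟨v, rfl⟩ | ⟨e, rfl⟩) | ⟨e, rfl⟩
    · rw [← EE_vert R n v]
      exact Submodule.subset_span ⟨(v, v), rfl⟩
    · rw [← EE_edge R n e]
      have h1 : e.val < n := by have := e.isLt; omega
      have h2 : e.val + 1 < n := by have := e.isLt; omega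
      exact Submodule.subset_span ⟨((⟨e.val, h1⟩ : Fin n), (⟨e.val + 1, h2⟩ : Fin n)), rfl⟩
    · rw [← EE_ghost R n e]
      have h1 : e.val < n := by have := e.isLt; omega
      have h2 : e.val + 1 < n := by have := e.isLt; omega
      exact Submodule.subset_span ⟨((⟨e.val + 1, h2⟩ : Fin n), (⟨e.val, h1⟩ : Fin n)), rfl⟩
  | add x y hx hy ihx ihy => exact Submodule.add_mem _ ihx ihy
  | zero => exact Submodule.zero_mem _
  | mul x y hx hy ihx ihy => exact mul_mem_ESpan R n ihx ihy
  | smul r x hx ih => exact Submodule.smul_mem _ r ih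

end LineAux
/-! ### The homomorphism `Φ` and the main theorem -/

namespace LineEmbed

open LeavittGraph LineAux

variable (R : Type) [CommRing R] (n : ℕ)

lemma wprod (i j k l : ℕ) (hj : j ≤ n - 1) (hk : k ≤ n - 1) :
    (lineWord R n i * star (lineWord R n j)) * (lineWord R n k * star (lineWord R n l)) =
      if j = k then lineWord R n i * star (lineWord R n l) else 0 := by
  rcases eq_or_ne j k with rfl | hne
  · rw [if_pos rfl, sand1 _ _ _ _ (by rw [L2Aux.wort R n j j hj hj, if_pos rfl])]
  · rw [if_neg hne, sand0 _ _ _ _ (by rw [L2Aux.wort R n j k hj hk, if_neg hne])]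

@[simp] lemma src_val (e : Fin (n - 1)) :
    Fin.val ((lineGraph n).src e) = e.val := rfl

@[simp] lemma rng_val (e : Fin (n - 1)) :
    Fin.val ((lineGraph n).rng e) = e.val + 1 := rfl

/-- The images of the generators. -/
noncomputable def F : LGen (lineGraph n) → L2 R
  | .vert v => lineWord R n (Fin.val v) * star (lineWord R n (Fin.val v))
  | .edge e => lineWord R n (Fin.val e) * star (lineWord R n (Fin.val e + 1))
  | .ghost e => lineWord R n (Fin.val e + 1) * star (lineWord R n (Fin.val e))

lemma hF : ∀ ⦃x y : FreeAlgebra R (LGen (lineGraph n))⦄,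
    LeavittRel (lineGraph n) R x y →
      FreeAlgebra.lift R (F R n) x = FreeAlgebra.lift R (F R n) y := by
  intro x y h
  induction h with
  | vert_self v =>
      simp only [map_mul, FreeAlgebra.lift_ι_apply, F]
      rw [wprod R n _ _ _ _ (by have := v.isLt; omega) (by have := v.isLt; omega), if_pos rfl]
  | @vert_ne v w h =>
      simp only [map_mul, map_zero, FreeAlgebra.lift_ι_apply, F]
      rw [wprod R n _ _ _ _ (by have := v.isLt; omega) (by have := w.isLt; omega),
        if_neg (fun hh => h (Fin.ext hh))]
  | src_edge e =>
      simp only [map_mul, FreeAlgebra.lift_ι_apply, F, src_val]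
      rw [wprod R n _ _ _ _ (by have := e.isLt; omega) (by have := e.isLt; omega)]
      exact if_pos rfl
  | edge_rng e =>
      simp only [map_mul, FreeAlgebra.lift_ι_apply, F, rng_val]
      rw [wprod R n _ _ _ _ (by have := e.isLt; omega) (by have := e.isLt; omega)]
      exact if_pos rfl
  | rng_ghost e =>
      simp only [map_mul, FreeAlgebra.lift_ι_apply, F, rng_val]
      rw [wprod R n _ _ _ _ (by have := e.isLt; omega) (by have := e.isLt; omega)]
      exact if_pos rfl
  | ghost_src e =>
      simp only [map_mul, FreeAlgebra.lift_ι_apply, F, src_val]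
      rw [wprod R n _ _ _ _ (by have := e.isLt; omega) (by have := e.isLt; omega)]
      exact if_pos rfl
  | ghost_edge_self e =>
      simp only [map_mul, FreeAlgebra.lift_ι_apply, F, rng_val]
      rw [wprod R n _ _ _ _ (by have := e.isLt; omega) (by have := e.isLt; omega)]
      exact if_pos rfl
  | @ghost_edge_ne e f h =>
      simp only [map_mul, map_zero, FreeAlgebra.lift_ι_apply, F]
      rw [wprod R n _ _ _ _ (by have := e.isLt; omega) (by have := f.isLt; omega),
        if_neg (fun hh => h (Fin.ext hh))]
  | cuntz_krieger v hfin hne =>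
      obtain ⟨e0, he0⟩ := hne
      have hv : v.val < n - 1 := by
        have h1 : Fin.val ((lineGraph n).src e0) = e0.val := rfl
        have h2 : Fin.val ((lineGraph n).src e0) = v.val := congrArg Fin.val he0
        have := e0.isLt
        omega
      have hset : hfin.toFinset = {(⟨v.val, hv⟩ : Fin (n - 1))} := by
        ext e
        erw [Set.Finite.mem_toFinset, Finset.mem_singleton]
        constructor
        · intro he
          have he' : (lineGraph n).src e = v := he
          have h2 := congrArg Fin.val he'
          exact Fin.ext h2
        · rintro rfl
          exact Fin.ext rfl
      erw [map_sum, hset, Finset.sum_singleton, map_mul]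
      simp only [FreeAlgebra.lift_ι_apply, F]
      rw [wprod R n _ _ _ _ (by omega) (by omega), if_pos rfl]

/-- The unital homomorphism from the ambient algebra to `L_{2,R}`. -/
noncomputable def Φ : LeavittAmbient (lineGraph n) R →ₐ[R] L2 R :=
  RingQuot.liftAlgHom R ⟨FreeAlgebra.lift R (F R n), hF R n⟩

lemma Φ_av (v : Fin n) :
    Φ R n (av (lineGraph n) R v) = lineWord R n v.val * star (lineWord R n v.val) := by
  erw [av, Φ, RingQuot.liftAlgHom_mkAlgHom_apply, FreeAlgebra.lift_ι_apply]; rfl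

lemma Φ_ae (e : Fin (n - 1)) :
    Φ R n (ae (lineGraph n) R e) =
      lineWord R n e.val * star (lineWord R n (e.val + 1)) := by
  erw [ae, Φ, RingQuot.liftAlgHom_mkAlgHom_apply, FreeAlgebra.lift_ι_apply]; rfl

lemma Φ_ag (e : Fin (n - 1)) :
    Φ R n (ag (lineGraph n) R e) =
      lineWord R n (e.val + 1) * star (lineWord R n e.val) := by
  erw [ag, Φ, RingQuot.liftAlgHom_mkAlgHom_apply, FreeAlgebra.lift_ι_apply]; rfl

lemma star_algebraMap_amb (r : R) :
    star (algebraMap R (LeavittAmbient (lineGraph n) R) r) =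
      algebraMap R (LeavittAmbient (lineGraph n) R) r := by
  rw [Algebra.algebraMap_eq_smul_one, LeavittGraph.star_smul', star_one]

lemma star_algebraMap_L2 (r : R) :
    star (algebraMap R (L2 R) r) = algebraMap R (L2 R) r := by
  rw [Algebra.algebraMap_eq_smul_one, L2.star_smul', star_one]

lemma Φ_star (x : LeavittAmbient (lineGraph n) R) :
    Φ R n (star x) = star (Φ R n x) := by
  obtain ⟨y, rfl⟩ := RingQuot.mkAlgHom_surjective R (LeavittRel (lineGraph n) R) x
  induction y using FreeAlgebra.induction with
  | grade0 r =>
      rw [AlgHom.commutes, star_algebraMap_amb, AlgHom.commutes, star_algebraMap_L2]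
  | grade1 g =>
      cases g with
      | vert v =>
          show Φ R n (star (av (lineGraph n) R v)) = star (Φ R n (av (lineGraph n) R v))
          erw [star_av, Φ_av, star_mul, star_star]
      | edge e =>
          show Φ R n (star (ae (lineGraph n) R e)) = star (Φ R n (ae (lineGraph n) R e))
          erw [star_ae, Φ_ag, Φ_ae, star_mul, star_star]
      | ghost e =>
          show Φ R n (star (ag (lineGraph n) R e)) = star (Φ R n (ag (lineGraph n) R e))
          erw [star_ag, Φ_ae, Φ_ag, star_mul, star_star]
  | mul x y ihx ihy =>
      rw [map_mul, star_mul, map_mul, ihx, ihy, ← star_mul, ← map_mul]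
  | add x y ihx ihy =>
      rw [map_add, star_add, map_add, ihx, ihy, ← star_add, ← map_add]

lemma Φ_vtx (i : ℕ) (h : i < n) :
    Φ R n (vtx R n i) = lineWord R n i * star (lineWord R n i) := by
  rw [vtx, dif_pos h, Φ_av]

lemma Φ_edg (i : ℕ) (h : i < n - 1) :
    Φ R n (edg R n i) = lineWord R n i * star (lineWord R n (i + 1)) := by
  rw [edg, dif_pos h, Φ_ae]

lemma Φ_pth (i k : ℕ) (hn : 1 ≤ n) (h : i + k ≤ n - 1) :
    Φ R n (pth R n i k) = lineWord R n i * star (lineWord R n (i + k)) := by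
  induction k generalizing i with
  | zero => rw [pth_zero, Φ_vtx R n i (by omega), Nat.add_zero]
  | succ k ih =>
      rw [pth_succ, map_mul, Φ_edg R n i (by omega), ih (i + 1) (by omega),
        wprod R n _ _ _ _ (by omega) (by omega), if_pos rfl,
        show i + 1 + k = i + (k + 1) from by omega]

lemma Φ_EE (i j : ℕ) (hn : 1 ≤ n) (hi : i ≤ n - 1) (hj : j ≤ n - 1) :
    Φ R n (EE R n i j) = lineWord R n i * star (lineWord R n j) := by
  rw [EE]
  split_ifs with h
  · rw [Φ_pth R n i (j - i) hn (by omega), show i + (j - i) = j from by omega]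
  · rw [Φ_star, Φ_pth R n j (i - j) hn (by omega), show j + (i - j) = i from by omega,
      star_mul, star_star]

/-- The restriction of `Φ` to the Leavitt path algebra, as a non-unital
star algebra homomorphism. -/
noncomputable def φf : LPA (lineGraph n) R →⋆ₙₐ[R] L2 R :=
  { toFun := fun x => Φ R n x.val
    map_smul' := fun c x => map_smul (Φ R n) c x.val
    map_zero' := map_zero (Φ R n)
    map_add' := fun x y => map_add (Φ R n) x.val y.val
    map_mul' := fun x y => map_mul (Φ R n) x.val y.val
    map_star' := fun x => Φ_star R n x.val }

lemma φf_apply (x : LPA (lineGraph n) R) : φf R n x = Φ R n x.val := rfl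

lemma sum_words (hn : 1 ≤ n) :
    ∑ i : Fin n, lineWord R n (i : ℕ) * star (lineWord R n (i : ℕ)) = 1 := by
  obtain ⟨m, rfl⟩ : ∃ m, n = m + 1 := ⟨n - 1, by omega⟩
  rw [Fin.sum_univ_eq_sum_range (fun i => lineWord R (m + 1) i * star (lineWord R (m + 1) i))
    (m + 1), Finset.sum_range_succ]
  have hlast : lineWord R (m + 1) m = La R ^ m := by
    rw [lineWord, if_pos (by omega)]
    norm_num
  have hsum : ∀ i ∈ Finset.range m,
      lineWord R (m + 1) i * star (lineWord R (m + 1) i) =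
        (La R ^ i * Lb R) * star (La R ^ i * Lb R) := by
    intro i hi
    rw [lineWord, if_neg (by have := Finset.mem_range.mp hi; omega)]
  rw [Finset.sum_congr rfl hsum, hlast, L2Aux.star_La_pow, add_comm]
  exact L2Aux.sumId R m

end LineEmbed
/-- The assignment `u_i ↦ α_i α_i*`, `e_j ↦ α_j α_{j+1}*` extends to a unital injective
`*`-algebra homomorphism `L_R(A_n) → L_{2,R}`. -/
theorem line_graph_embeds_into_l2
    (R : Type) [CommRing R] (n : ℕ) (hn : 2 ≤ n) :
    ∃ φ : LPA (lineGraph n) R →⋆ₙₐ[R] L2 R,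
      (∀ i : Fin n, φ (lv (lineGraph n) R i) =
        lineWord R n i * star (lineWord R n i)) ∧
      (∀ j : Fin (n - 1), φ (le (lineGraph n) R j) =
        lineWord R n j * star (lineWord R n (j + 1))) ∧
      φ (∑ i : Fin n, lv (lineGraph n) R i) = 1 ∧
      Function.Injective φ := by
  have hn1 : 1 ≤ n := by omega
  refine ⟨LineEmbed.φf R n, ?_, ?_, ?_, ?_⟩
  · intro i
    rw [LineEmbed.φf_apply]
    exact LineEmbed.Φ_av R n i
  · intro j
    rw [LineEmbed.φf_apply]
    exact LineEmbed.Φ_ae R n j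
  · rw [LineEmbed.φf_apply]
    have hval : ((∑ i : Fin n, lv (lineGraph n) R i : LPA (lineGraph n) R) :
        LeavittAmbient (lineGraph n) R) = ∑ i : Fin n, av (lineGraph n) R i := by
      erw [AddSubmonoidClass.coe_finset_sum]
      exact Finset.sum_congr rfl fun i _ => rfl
    erw [hval, map_sum, Finset.sum_congr rfl fun i _ => LineEmbed.Φ_av R n i]
    exact LineEmbed.sum_words R n hn1
  · refine (injective_iff_map_eq_zero (LineEmbed.φf R n)).mpr ?_
    intro x hx0
    classical
    have hx2 : (x : LeavittAmbient (lineGraph n) R) ∈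
        NonUnitalAlgebra.adjoin R (genSet (lineGraph n) R) := x.2
    have hmem : (x : LeavittAmbient (lineGraph n) R) ∈
        Submodule.span R (Set.range (fun p : Fin n × Fin n =>
          LineAux.EE R n p.1.val p.2.val)) :=
      LineAux.adjoin_le_ESpan R n hx2
    obtain ⟨c, hc⟩ := (Submodule.mem_span_range_iff_exists_fun R).mp hmem
    have hΦ0 : LineEmbed.Φ R n (x : LeavittAmbient (lineGraph n) R) = 0 := hx0
    rw [← hc, map_sum] at hΦ0
    have hterm : ∀ p : Fin n × Fin n,
        LineEmbed.Φ R n (c p • LineAux.EE R n p.1.val p.2.val)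
          = c p • (lineWord R n p.1.val * star (lineWord R n p.2.val)) := by
      intro p
      rw [map_smul, LineEmbed.Φ_EE R n _ _ hn1 (by have := p.1.isLt; omega)
        (by have := p.2.isLt; omega)]
    rw [Finset.sum_congr rfl fun p _ => hterm p] at hΦ0
    have hc0 : ∀ p0 : Fin n × Fin n, c p0 = 0 := by
      intro p0
      have hA : ∀ p : Fin n × Fin n,
          (L2Rep.rep R (c p • (lineWord R n p.1.val * star (lineWord R n p.2.val))))
            (Finsupp.single (L2Rep.pf p0.2.val) (1 : R))
          = c p • (if p.2.val = p0.2.val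
              then Finsupp.single (L2Rep.pf p.1.val) (1 : R) else 0) := by
        intro p
        rw [map_smul, LinearMap.smul_apply,
          L2Rep.act_ws R n p.1.val p.2.val p0.2.val (by have := p.1.isLt; omega)
            (by have := p.2.isLt; omega) (by have := p0.2.isLt; omega)]
      have hB : (∑ p : Fin n × Fin n,
          c p • (if p.2.val = p0.2.val
            then Finsupp.single (L2Rep.pf p.1.val) (1 : R) else 0)) = 0 := by
        rw [← Finset.sum_congr rfl fun p _ => hA p, ← LinearMap.sum_apply, ← map_sum,
          hΦ0, map_zero, LinearMap.zero_apply]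
      have hC := congrArg (fun u : L2Rep.M R => u (L2Rep.pf p0.1.val)) hB
      have hD : ∀ p : Fin n × Fin n,
          ((c p • (if p.2.val = p0.2.val
            then Finsupp.single (L2Rep.pf p.1.val) (1 : R) else 0)) : L2Rep.M R)
              (L2Rep.pf p0.1.val) = if p = p0 then c p else 0 := by
        intro p
        rw [Finsupp.smul_apply]
        by_cases h2 : p.2 = p0.2
        · rw [if_pos (congrArg Fin.val h2), Finsupp.single_apply]
          by_cases h1 : p.1 = p0.1
          · rw [if_pos (by rw [h1]), if_pos (Prod.ext_iff.mpr ⟨h1, h2⟩), smul_eq_mul,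
              mul_one]
          · rw [if_neg (fun hh => h1 (Fin.ext (L2Rep.pf_injective hh))), smul_zero,
              if_neg (fun hh => h1 (congrArg Prod.fst hh))]
        · rw [if_neg (fun hh => h2 (Fin.ext hh)), Finsupp.coe_zero, Pi.zero_apply,
            smul_zero, if_neg (fun hh => h2 (congrArg Prod.snd hh))]
      rw [Finsupp.finset_sum_apply, Finset.sum_congr rfl fun p _ => hD p,
        Finset.sum_ite_eq' Finset.univ p0 c, if_pos (Finset.mem_univ p0),
        Finsupp.coe_zero, Pi.zero_apply] at hC
      exact hC
    have hx : (x : LeavittAmbient (lineGraph n) R) = 0 := by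
      rw [← hc]
      exact Finset.sum_eq_zero fun p _ => by rw [hc0 p, zero_smul]
    exact Subtype.ext hx
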